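/- arXiv:2207.09368 — 3 statements merged into one kernel-verified Lean document; each statement's English description precedes it below -/
import Mathlib

section
/- Let λ be a plane of the Bloch sphere (a two-element subset of {X,Y,Z}) and P the Pauli not in λ. Let |φ⟩ and |φ'⟩ be states of a finite register V of qubits and u ∈ V. If for all angles α, ⟨+^λ_α|_u |φ⟩ and ⟨+^λ_α|_u |φ'⟩ are equal up to a global phase, and |⟨+^λ_α|_u |φ⟩| = 1/√2 (with |φ⟩ normalized), then either |φ⟩ ≃ |φ'⟩ up to global phase, or there exist x ∈ {0,1} and a state |ψ⟩ on V∖{u} such that |φ⟩ ≃ |+^P_{xπ}⟩_u ⊗ |ψ⟩ and |φ'⟩ ≃ |−^P_{xπ}⟩_u ⊗ |ψ⟩. -/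
/-- The Pauli matrices, indexed by `Fin 3`: `0 ↦ X`, `1 ↦ Y`, `2 ↦ Z`. -/
noncomputable def pauliMat : Fin 3 → Matrix (Fin 2) (Fin 2) ℂ :=
  ![!![0, 1; 1, 0], !![0, -Complex.I; Complex.I, 0], !![1, 0; 0, -1]]

/-- `|+^P_0⟩`, the `+1` eigenvector of the Pauli `P`. -/
noncomputable def plusVec : Fin 3 → Fin 2 → ℂ :=
  ![![(Real.sqrt 2 : ℂ)⁻¹, (Real.sqrt 2 : ℂ)⁻¹],
    ![(Real.sqrt 2 : ℂ)⁻¹, Complex.I * (Real.sqrt 2 : ℂ)⁻¹],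
    ![1, 0]]

/-- `|−^P_0⟩`, the `−1` eigenvector of the Pauli `P`. -/
noncomputable def minusVec : Fin 3 → Fin 2 → ℂ :=
  ![![(Real.sqrt 2 : ℂ)⁻¹, -(Real.sqrt 2 : ℂ)⁻¹],
    ![(Real.sqrt 2 : ℂ)⁻¹, -(Complex.I * (Real.sqrt 2 : ℂ)⁻¹)],
    ![0, 1]]

/-- `|+^λ_α⟩ = (|+^P_0⟩ + e^{iα} |−^P_0⟩)/√2`, where `P` is the Pauli complementary to the
plane `λ` (the plane `λ` consists of the two Paulis distinct from `P`). -/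
noncomputable def planePlus (P : Fin 3) (α : ℝ) : Fin 2 → ℂ :=
  (Real.sqrt 2 : ℂ)⁻¹ • (plusVec P + Complex.exp (α * Complex.I) • minusVec P)

/-- `|−^λ_α⟩ = (|+^P_0⟩ − e^{iα} |−^P_0⟩)/√2`. -/
noncomputable def planeMinus (P : Fin 3) (α : ℝ) : Fin 2 → ℂ :=
  (Real.sqrt 2 : ℂ)⁻¹ • (plusVec P - Complex.exp (α * Complex.I) • minusVec P)
/-- Squared norm of a state given by its amplitude function. -/
noncomputable def norm2 {ι : Type*} [Fintype ι] (ψ : ι → ℂ) : ℝ := ∑ s, ‖ψ s‖ ^ 2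

/-- Partial inner product `⟨χ|_u |φ⟩`: contracting qubit `u` of `φ` with the bra of `χ`,
yielding a state of the register `V ∖ {u}`. -/
noncomputable def partialInner {V : Type*} [Fintype V] [DecidableEq V] (u : V)
    (χ : Fin 2 → ℂ) (φ : (V → Fin 2) → ℂ) : ({v : V // v ≠ u} → Fin 2) → ℂ :=
  fun t => ∑ b : Fin 2, (starRingEnd ℂ) (χ b) *
    φ (fun v => if h : v = u then b else t ⟨v, h⟩)

/-- `χ_u ⊗ ψ`: the state with qubit `u` in the single-qubit state `χ` and the rest of the
register in the state `ψ`. -/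
def tensorAt {V : Type*} [DecidableEq V] (u : V) (χ : Fin 2 → ℂ)
    (ψ : ({v : V // v ≠ u} → Fin 2) → ℂ) : (V → Fin 2) → ℂ :=
  fun s => χ (s u) * ψ (fun v => s v.1)

/-- `|+^P_{xπ}⟩`: for `x = 0` the `+1` eigenvector of `P`, for `x = 1` the `−1` eigenvector. -/
noncomputable def eigVec (P : Fin 3) : Fin 2 → Fin 2 → ℂ := ![plusVec P, minusVec P]

namespace Stmt6Aux

noncomputable def ip {ι : Type*} [Fintype ι] (v w : ι → ℂ) : ℂ :=
  ∑ s, (starRingEnd ℂ) (v s) * w s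

variable {ι : Type*} [Fintype ι]

lemma ip_add_right (a v w : ι → ℂ) : ip a (v + w) = ip a v + ip a w := by
  simp [ip, mul_add, Finset.sum_add_distrib]

lemma ip_smul_right (a : ι → ℂ) (c : ℂ) (v : ι → ℂ) : ip a (c • v) = c * ip a v := by
  simp [ip, Finset.mul_sum]; congr 1; ext s; ring

lemma ip_smul_left (a : ι → ℂ) (c : ℂ) (v : ι → ℂ) :
    ip (c • v) a = (starRingEnd ℂ) c * ip v a := by
  simp [ip, Finset.mul_sum]; congr 1; ext s; ring

lemma ip_comm (v w : ι → ℂ) : ip v w = (starRingEnd ℂ) (ip w v) := by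
  simp only [ip, map_sum, map_mul, Complex.conj_conj]
  refine Finset.sum_congr rfl fun s _ => ?_
  ring

lemma ip_self (v : ι → ℂ) : ip v v = (norm2 v : ℂ) := by
  unfold ip norm2
  push_cast
  refine Finset.sum_congr rfl fun s _ => ?_
  rw [mul_comm, Complex.mul_conj, Complex.normSq_eq_norm_sq]; push_cast; ring

lemma norm2_eq_zero {v : ι → ℂ} (h : norm2 v = 0) : v = 0 := by
  funext s
  have h0 : ∀ t ∈ Finset.univ, (0:ℝ) ≤ ‖v t‖ ^ 2 := fun t _ => by positivity
  have := (Finset.sum_eq_zero_iff_of_nonneg h0).mp h s (Finset.mem_univ s)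
  simpa using this

lemma ip_self_ne_zero {v : ι → ℂ} (h : v ≠ 0) : ip v v ≠ 0 := by
  rw [ip_self]
  intro hc
  apply h
  apply norm2_eq_zero
  exact_mod_cast hc

lemma norm2_smul (c : ℂ) (v : ι → ℂ) : norm2 (c • v) = ‖c‖ ^ 2 * norm2 v := by
  simp [norm2, mul_pow, Finset.mul_sum]

lemma norm_sq_add (z w r : ℂ) : ‖z + r * w‖ ^ 2 =
    ‖z‖ ^ 2 + ‖r‖ ^ 2 * ‖w‖ ^ 2 + 2 * (r * ((starRingEnd ℂ) z * w)).re := by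
  have h1 : z * (starRingEnd ℂ) (r * w) = (starRingEnd ℂ) (r * ((starRingEnd ℂ) z * w)) := by
    simp [map_mul]; ring
  rw [
    Complex.sq_norm, Complex.sq_norm, Complex.sq_norm, Complex.sq_norm, Complex.normSq_add,
    h1, Complex.conj_re, Complex.normSq_mul]

lemma norm2_add_smul (r : ℂ) (x y : ι → ℂ) :
    norm2 (x + r • y) = norm2 x + ‖r‖ ^ 2 * norm2 y + 2 * (r * ip x y).re := by
  simp only [norm2, ip, Pi.add_apply, Pi.smul_apply, smul_eq_mul, norm_sq_add]
  rw [Finset.sum_add_distrib, Finset.sum_add_distrib, ← Finset.mul_sum]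
  congr 1
  rw [Finset.mul_sum, Complex.re_sum, Finset.mul_sum]

lemma recon (P : Fin 3) (v : Fin 2 → ℂ) (β : Fin 2) :
    v β = (∑ γ : Fin 2, (starRingEnd ℂ) (plusVec P γ) * v γ) * plusVec P β
        + (∑ γ : Fin 2, (starRingEnd ℂ) (minusVec P γ) * v γ) * minusVec P β := by
  have h2 : (Real.sqrt 2 : ℂ) * (Real.sqrt 2 : ℂ) = 2 := by
    norm_cast
    rw [Real.mul_self_sqrt] <;> norm_num
  have hs : (Real.sqrt 2 : ℂ) ≠ 0 := by
    intro h; rw [h] at h2; norm_num at h2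
  have hI := Complex.I_mul_I
  fin_cases P <;> fin_cases β <;>
    simp only [plusVec, minusVec, Fin.sum_univ_two, Matrix.cons_val', Matrix.cons_val_zero,
      Matrix.cons_val_one, Matrix.head_cons, Matrix.head_fin_const, Fin.isValue,
      Matrix.cons_val_fin_one, map_inv₀, Complex.conj_ofReal, map_mul, Complex.conj_I,
      map_neg, map_one, map_zero, Fin.zero_eta, Fin.mk_one, Fin.reduceFinMk, Matrix.cons_val]
  all_goals field_simp
  all_goals first
      | ring1
      | linear_combination (v 0) * h2
      | linear_combination (v 1) * h2
      | linear_combination (v 1) * h2 + 2 * v 1 * hI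
      | linear_combination (v 0) * h2 + 2 * v 0 * hI
      | linear_combination (v 0 + v 1) * h2
      | linear_combination (v 0 + 2 * v 1) * h2
      | linear_combination (2 * v 0 + v 1) * h2
      | linear_combination (v 0 + v 1) * h2 + 2 * v 1 * hI
      | linear_combination (v 0 + v 1) * h2 + 2 * v 0 * hI
      | linear_combination (2 * v 0 + v 1) * h2 + 2 * v 1 * hI
      | linear_combination (v 0 + 2 * v 1) * h2 + 2 * v 1 * hI
      | linear_combination (2 * v 0 + v 1) * h2 + 2 * v 0 * hI
      | linear_combination (v 0 + 2 * v 1) * h2 + 2 * v 0 * hI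

lemma conj_mul_self {c : ℂ} (hc : ‖c‖ = 1) : (starRingEnd ℂ) c * c = 1 := by
  rw [mul_comm, Complex.mul_conj, Complex.normSq_eq_norm_sq, hc]
  norm_num

lemma unit_real_pm {w : ℂ} (hw : ‖w‖ = 1) (him : w = (starRingEnd ℂ) w) :
    w = 1 ∨ w = -1 := by
  have him' : w.im = 0 := by
    have h := congrArg Complex.im him
    simp only [Complex.conj_im] at h
    linarith
  have hn : w.re * w.re + w.im * w.im = 1 := by
    have h1 : Complex.normSq w = 1 := by
      rw [Complex.normSq_eq_norm_sq, hw]; norm_num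
    simpa [Complex.normSq_apply] using h1
  have : (w.re - 1) * (w.re + 1) = 0 := by nlinarith
  rcases mul_eq_zero.mp this with h | h
  · left; rw [Complex.ext_iff]; constructor <;> simp [him'] <;> linarith
  · right; rw [Complex.ext_iff]; constructor <;> simp [him'] <;> linarith

lemma extract {Na Nb : ℝ} {z : ℂ}
    (h : ∀ α : ℝ, Na + Nb + 2 * ((starRingEnd ℂ) (Complex.exp (α * Complex.I)) * z).re = 1) :
    z = 0 ∧ Na + Nb = 1 := by
  have he0 : (starRingEnd ℂ) (Complex.exp (((0:ℝ):ℂ) * Complex.I)) = 1 := by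
    simp
  have heπ : (starRingEnd ℂ) (Complex.exp (((Real.pi :ℝ):ℂ) * Complex.I)) = -1 := by
    rw [Complex.exp_pi_mul_I]; simp
  have heh : (starRingEnd ℂ) (Complex.exp (((Real.pi/2 :ℝ):ℂ) * Complex.I)) = -Complex.I := by
    have : Complex.exp (((Real.pi/2 :ℝ):ℂ) * Complex.I) = Complex.I := by
      rw [Complex.exp_mul_I, ← Complex.ofReal_cos, ← Complex.ofReal_sin,
        Real.cos_pi_div_two, Real.sin_pi_div_two]
      simp
    rw [this, Complex.conj_I]
  have h0 := h 0
  have hπ := h Real.pi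
  have hh := h (Real.pi/2)
  rw [he0, one_mul] at h0
  rw [heπ, neg_one_mul, Complex.neg_re] at hπ
  rw [heh] at hh
  have hhre : (-Complex.I * z).re = z.im := by simp [Complex.mul_re]
  rw [hhre] at hh
  have hre : z.re = 0 := by linarith
  have him : z.im = 0 := by linarith
  constructor
  · rw [Complex.ext_iff]; exact ⟨hre, him⟩
  · rw [hre] at h0; linarith

end Stmt6Aux

open Stmt6Aux

/-- Lemma `lem:meas`: if `|φ⟩` and `|φ'⟩` agree up to phase after any measurement of qubit `u`
in the plane `λ` complementary to `P`, all outcomes having probability `1/2`, then either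
`|φ⟩ ≃ |φ'⟩`, or qubit `u` factors out as opposite `P`-eigenstates:
`|φ⟩ ≃ |+^P_{xπ}⟩_u ⊗ |ψ⟩` and `|φ'⟩ ≃ |−^P_{xπ}⟩_u ⊗ |ψ⟩`. -/
theorem stmt6 {V : Type*} [Fintype V] [DecidableEq V] (u : V) (P : Fin 3)
    (φ φ' : (V → Fin 2) → ℂ) (hφ : norm2 φ = 1) (hφ' : norm2 φ' = 1)
    (hsim : ∀ α : ℝ, ∃ c : ℂ, ‖c‖ = 1 ∧
      partialInner u (planePlus P α) φ' = c • partialInner u (planePlus P α) φ)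
    (hhalf : ∀ α : ℝ, norm2 (partialInner u (planePlus P α) φ) = 1 / 2) :
    (∃ c : ℂ, ‖c‖ = 1 ∧ φ' = c • φ) ∨
    ∃ (x : Fin 2) (ψ : ({v : V // v ≠ u} → Fin 2) → ℂ),
      (∃ c : ℂ, ‖c‖ = 1 ∧ φ = c • tensorAt u (eigVec P x) ψ) ∧
      (∃ c : ℂ, ‖c‖ = 1 ∧ φ' = c • tensorAt u (eigVec P (x + 1)) ψ) := by
  classical
  -- basic constants
  have hcsqrt : (starRingEnd ℂ) ((Real.sqrt 2 : ℂ)⁻¹) = (Real.sqrt 2 : ℂ)⁻¹ := by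
    rw [map_inv₀, Complex.conj_ofReal]
  have hsne : ((Real.sqrt 2 : ℂ))⁻¹ ≠ 0 := by
    simp only [ne_eq, inv_eq_zero, Complex.ofReal_eq_zero]
    positivity
  have hsnorm : ‖((Real.sqrt 2 : ℂ))⁻¹‖ ^ 2 = 1/2 := by
    rw [norm_inv, Complex.norm_real, Real.norm_eq_abs, abs_of_nonneg (Real.sqrt_nonneg 2), inv_pow,
      Real.sq_sqrt (by norm_num : (0:ℝ) ≤ 2)]
    norm_num
  have hre1 : ∀ α : ℝ, ‖(starRingEnd ℂ) (Complex.exp ((α:ℂ) * Complex.I))‖ = 1 := by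
    intro α
    rw [RCLike.norm_conj]
    exact Complex.norm_exp_ofReal_mul_I α
  -- expansion of the planePlus partial inner product
  have hA : ∀ (α : ℝ) (f : (V → Fin 2) → ℂ),
      partialInner u (planePlus P α) f
        = (Real.sqrt 2 : ℂ)⁻¹ • (partialInner u (plusVec P) f
            + (starRingEnd ℂ) (Complex.exp ((α:ℂ) * Complex.I)) •
                partialInner u (minusVec P) f) := by
    intro α f
    funext t
    simp only [partialInner, planePlus, Pi.smul_apply, Pi.add_apply, smul_eq_mul,
      map_mul, map_add, hcsqrt, Fin.sum_univ_two]
    ring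
  -- reconstruction
  have hrec : ∀ (f : (V → Fin 2) → ℂ) (s : V → Fin 2),
      f s = partialInner u (plusVec P) f (fun v => s v.1) * plusVec P (s u)
          + partialInner u (minusVec P) f (fun v => s v.1) * minusVec P (s u) := by
    intro f s
    have hs0 : (fun v => if h : v = u then s u else s v) = s := by
      funext v
      by_cases h : v = u
      · rw [dif_pos h, h]
      · rw [dif_neg h]
    have h := recon P (fun β => f (fun v => if h : v = u then β else s v)) (s u)
    simp only [partialInner]
    rw [hs0] at h
    exact h
  -- norm conditions
  have hhalf' : ∀ α : ℝ, norm2 (partialInner u (planePlus P α) φ') = 1 / 2 := by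
    intro α
    obtain ⟨c, hc, hcc⟩ := hsim α
    rw [hcc, norm2_smul, hc, hhalf α]
    norm_num
  have hN : ∀ (f : (V → Fin 2) → ℂ),
      (∀ α : ℝ, norm2 (partialInner u (planePlus P α) f) = 1/2) →
      ∀ α : ℝ, norm2 (partialInner u (plusVec P) f) + norm2 (partialInner u (minusVec P) f)
        + 2 * ((starRingEnd ℂ) (Complex.exp ((α:ℂ) * Complex.I)) *
            ip (partialInner u (plusVec P) f) (partialInner u (minusVec P) f)).re = 1 := by
    intro f hf α
    have h := hf α
    rw [hA α f, norm2_smul, hsnorm, norm2_add_smul, hre1 α, one_pow, one_mul] at h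
    linarith
  obtain ⟨hz, hNab⟩ := extract (hN φ hhalf)
  obtain ⟨hz', hNab'⟩ := extract (hN φ' hhalf')
  -- the phase relations
  have hE : ∀ α : ℝ, ∃ c : ℂ, ‖c‖ = 1 ∧
      partialInner u (plusVec P) φ' + (starRingEnd ℂ) (Complex.exp ((α:ℂ) * Complex.I)) •
          partialInner u (minusVec P) φ'
        = c • (partialInner u (plusVec P) φ + (starRingEnd ℂ) (Complex.exp ((α:ℂ) * Complex.I)) •
          partialInner u (minusVec P) φ) := by
    intro α
    obtain ⟨c, hc, hcc⟩ := hsim α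
    refine ⟨c, hc, ?_⟩
    rw [hA α φ, hA α φ', smul_comm] at hcc
    exact smul_right_injective _ hsne hcc
  -- abbreviations
  set a := partialInner u (plusVec P) φ with ha_def
  set b := partialInner u (minusVec P) φ with hb_def
  set a' := partialInner u (plusVec P) φ' with ha'_def
  set b' := partialInner u (minusVec P) φ' with hb'_def
  -- exp values
  have he0 : (starRingEnd ℂ) (Complex.exp (((0:ℝ):ℂ) * Complex.I)) = 1 := by simp
  have heπ : (starRingEnd ℂ) (Complex.exp (((Real.pi:ℝ):ℂ) * Complex.I)) = -1 := by
    rw [Complex.exp_pi_mul_I]; simp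
  have heh : (starRingEnd ℂ) (Complex.exp (((Real.pi/2:ℝ):ℂ) * Complex.I)) = -Complex.I := by
    have h : Complex.exp (((Real.pi/2:ℝ):ℂ) * Complex.I) = Complex.I := by
      rw [Complex.exp_mul_I, ← Complex.ofReal_cos, ← Complex.ofReal_sin,
        Real.cos_pi_div_two, Real.sin_pi_div_two]
      simp
    rw [h, Complex.conj_I]
  obtain ⟨c₀, hc₀n, E0⟩ := hE 0
  obtain ⟨cπ, hcπn, Eπ⟩ := hE Real.pi
  obtain ⟨c₁, hc₁n, E1⟩ := hE (Real.pi/2)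
  rw [he0, one_smul, one_smul] at E0
  rw [heπ] at Eπ
  rw [heh] at E1
  have u0 : (starRingEnd ℂ) c₀ * c₀ = 1 := conj_mul_self hc₀n
  have uπ : (starRingEnd ℂ) cπ * cπ = 1 := conj_mul_self hcπn
  -- pointwise versions
  have E0' : ∀ t, a' t + b' t = c₀ * (a t + b t) := fun t => by
    have h := congrFun E0 t
    simpa using h
  have Eπ' : ∀ t, a' t - b' t = cπ * (a t - b t) := fun t => by
    have h := congrFun Eπ t
    simp only [Pi.add_apply, Pi.smul_apply, smul_eq_mul] at h
    linear_combination h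
  have E1' : ∀ t, a' t - Complex.I * b' t = c₁ * (a t - Complex.I * b t) := fun t => by
    have h := congrFun E1 t
    simp only [Pi.add_apply, Pi.smul_apply, smul_eq_mul] at h
    linear_combination h
  have hzba : ip b a = 0 := by rw [ip_comm, hz, map_zero]
  by_cases hb0 : b = 0
  · -- qubit u of φ is in the + eigenstate
    have hNb : norm2 b = 0 := by rw [hb0]; simp [norm2]
    have hipaa : ip a a = 1 := by
      rw [ip_self]
      have h : norm2 a = 1 := by linarith
      rw [h]; norm_num
    have hbt : ∀ t, b t = 0 := fun t => by rw [hb0]; rfl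
    have ea' : ∀ t, a' t = ((c₀ + cπ)/2) * a t := fun t => by
      linear_combination (1/2) * E0' t + (1/2) * Eπ' t + ((c₀ - cπ)/2) * hbt t
    have eb' : ∀ t, b' t = ((c₀ - cπ)/2) * a t := fun t => by
      linear_combination (1/2) * E0' t - (1/2) * Eπ' t + ((c₀ + cπ)/2) * hbt t
    have ea'v : a' = ((c₀ + cπ)/2) • a := by
      funext t; rw [Pi.smul_apply, smul_eq_mul]; exact ea' t
    have eb'v : b' = ((c₀ - cπ)/2) • a := by
      funext t; rw [Pi.smul_apply, smul_eq_mul]; exact eb' t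
    have key : ((starRingEnd ℂ) c₀ + (starRingEnd ℂ) cπ) * (c₀ - cπ) = 0 := by
      have h := hz'
      rw [ea'v, eb'v, ip_smul_left, ip_smul_right, hipaa] at h
      simp only [map_div₀, map_add, map_ofNat] at h
      linear_combination 4 * h
    have hwn : ‖(starRingEnd ℂ) cπ * c₀‖ = 1 := by
      rw [norm_mul, RCLike.norm_conj, hcπn, hc₀n]; norm_num
    have him : (starRingEnd ℂ) cπ * c₀ = (starRingEnd ℂ) ((starRingEnd ℂ) cπ * c₀) := by
      rw [map_mul, Complex.conj_conj]
      linear_combination key - u0 + uπ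
    rcases unit_real_pm hwn him with hw | hw
    · -- global phase
      have hceq : c₀ = cπ := by linear_combination cπ * hw - c₀ * uπ
      left
      refine ⟨c₀, hc₀n, ?_⟩
      funext s
      have h1 := hrec φ s
      have h2 := hrec φ' s
      rw [← ha_def, ← hb_def] at h1
      rw [← ha'_def, ← hb'_def] at h2
      rw [Pi.smul_apply, smul_eq_mul]
      linear_combination h2 - c₀ * h1 + plusVec P (s u) * ea' (fun v => s ↑v)
        + minusVec P (s u) * eb' (fun v => s ↑v)
        - (a (fun v => s ↑v) * (plusVec P (s u) - minusVec P (s u)) / 2) * hceq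
        - c₀ * minusVec P (s u) * hbt (fun v => s ↑v)
    · -- factorized case, x = 0
      have hceq2 : c₀ = -cπ := by linear_combination cπ * hw - c₀ * uπ
      right
      refine ⟨0, a, ⟨1, by norm_num, ?_⟩, ⟨c₀, hc₀n, ?_⟩⟩
      · funext s
        have h1 := hrec φ s
        rw [← ha_def, ← hb_def] at h1
        simp only [Pi.smul_apply, smul_eq_mul, one_mul, tensorAt, eigVec,
          Matrix.cons_val_zero]
        linear_combination h1 + minusVec P (s u) * hbt (fun v => s ↑v)
      · funext s
        have h2 := hrec φ' s
        rw [← ha'_def, ← hb'_def] at h2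
        have h01 : (0 + 1 : Fin 2) = 1 := rfl
        simp only [h01, Pi.smul_apply, smul_eq_mul, tensorAt, eigVec,
          Matrix.cons_val_one, Matrix.head_cons, Matrix.cons_val_zero]
        linear_combination h2 + plusVec P (s u) * ea' (fun v => s ↑v)
          + minusVec P (s u) * eb' (fun v => s ↑v)
          + (a (fun v => s ↑v) * (plusVec P (s u) - minusVec P (s u)) / 2) * hceq2
  by_cases ha0 : a = 0
  · -- qubit u of φ is in the - eigenstate
    have hNa : norm2 a = 0 := by rw [ha0]; simp [norm2]
    have hipbb : ip b b = 1 := by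
      rw [ip_self]
      have h : norm2 b = 1 := by linarith
      rw [h]; norm_num
    have hat : ∀ t, a t = 0 := fun t => by rw [ha0]; rfl
    have ea' : ∀ t, a' t = ((c₀ - cπ)/2) * b t := fun t => by
      linear_combination (1/2) * E0' t + (1/2) * Eπ' t + ((c₀ + cπ)/2) * hat t
    have eb' : ∀ t, b' t = ((c₀ + cπ)/2) * b t := fun t => by
      linear_combination (1/2) * E0' t - (1/2) * Eπ' t + ((c₀ - cπ)/2) * hat t
    have ea'v : a' = ((c₀ - cπ)/2) • b := by
      funext t; rw [Pi.smul_apply, smul_eq_mul]; exact ea' t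
    have eb'v : b' = ((c₀ + cπ)/2) • b := by
      funext t; rw [Pi.smul_apply, smul_eq_mul]; exact eb' t
    have key : ((starRingEnd ℂ) c₀ - (starRingEnd ℂ) cπ) * (c₀ + cπ) = 0 := by
      have h := hz'
      rw [ea'v, eb'v, ip_smul_left, ip_smul_right, hipbb] at h
      simp only [map_div₀, map_sub, map_ofNat] at h
      linear_combination 4 * h
    have hwn : ‖(starRingEnd ℂ) cπ * c₀‖ = 1 := by
      rw [norm_mul, RCLike.norm_conj, hcπn, hc₀n]; norm_num
    have him : (starRingEnd ℂ) cπ * c₀ = (starRingEnd ℂ) ((starRingEnd ℂ) cπ * c₀) := by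
      rw [map_mul, Complex.conj_conj]
      linear_combination -key + u0 - uπ
    rcases unit_real_pm hwn him with hw | hw
    · -- global phase
      have hceq : c₀ = cπ := by linear_combination cπ * hw - c₀ * uπ
      left
      refine ⟨c₀, hc₀n, ?_⟩
      funext s
      have h1 := hrec φ s
      have h2 := hrec φ' s
      rw [← ha_def, ← hb_def] at h1
      rw [← ha'_def, ← hb'_def] at h2
      rw [Pi.smul_apply, smul_eq_mul]
      linear_combination h2 - c₀ * h1 + plusVec P (s u) * ea' (fun v => s ↑v)
        + minusVec P (s u) * eb' (fun v => s ↑v)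
        - (b (fun v => s ↑v) * (minusVec P (s u) - plusVec P (s u)) / 2) * hceq
        - c₀ * plusVec P (s u) * hat (fun v => s ↑v)
    · -- factorized case, x = 1
      have hceq2 : c₀ = -cπ := by linear_combination cπ * hw - c₀ * uπ
      right
      refine ⟨1, b, ⟨1, by norm_num, ?_⟩, ⟨c₀, hc₀n, ?_⟩⟩
      · funext s
        have h1 := hrec φ s
        rw [← ha_def, ← hb_def] at h1
        simp only [Pi.smul_apply, smul_eq_mul, one_mul, tensorAt, eigVec,
          Matrix.cons_val_one, Matrix.head_cons, Matrix.cons_val_zero]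
        linear_combination h1 + plusVec P (s u) * hat (fun v => s ↑v)
      · funext s
        have h2 := hrec φ' s
        rw [← ha'_def, ← hb'_def] at h2
        have h11 : (1 + 1 : Fin 2) = 0 := rfl
        simp only [h11, Pi.smul_apply, smul_eq_mul, tensorAt, eigVec,
          Matrix.cons_val_zero]
        linear_combination h2 + plusVec P (s u) * ea' (fun v => s ↑v)
          + minusVec P (s u) * eb' (fun v => s ↑v)
          - (b (fun v => s ↑v) * (plusVec P (s u) - minusVec P (s u)) / 2) * hceq2
  -- generic case: a ≠ 0 and b ≠ 0, the phases must agree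
  have A0 := congrArg (ip a) E0
  have Aπ := congrArg (ip a) Eπ
  have A1 := congrArg (ip a) E1
  have B0 := congrArg (ip b) E0
  have Bπ := congrArg (ip b) Eπ
  have B1 := congrArg (ip b) E1
  simp only [ip_add_right, ip_smul_right] at A0 Aπ A1 B0 Bπ B1
  rw [hz] at A0 Aπ A1
  rw [hzba] at B0 Bπ B1
  have r1 : ((1 - Complex.I) * c₀ + (1 + Complex.I) * cπ - 2 * c₁) * ip a a = 0 := by
    linear_combination (Complex.I - 1) * A0 - (1 + Complex.I) * Aπ + 2 * A1
  have r2 : ((1 - Complex.I) * c₀ - (1 + Complex.I) * cπ + 2 * Complex.I * c₁) * ip b b = 0 := by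
    linear_combination (Complex.I - 1) * B0 - (1 + Complex.I) * Bπ + 2 * B1
  have hone : (1 : ℂ) - Complex.I ≠ 0 := by
    intro h
    have := congrArg Complex.im h
    simp at this
  have htwo : (1 : ℂ) + Complex.I ≠ 0 := by
    intro h
    have := congrArg Complex.im h
    simp at this
  have r1' : (1 - Complex.I) * c₀ + (1 + Complex.I) * cπ - 2 * c₁ = 0 := by
    rcases mul_eq_zero.mp r1 with h | h
    · exact h
    · exact absurd h (ip_self_ne_zero ha0)
  have r2' : (1 - Complex.I) * c₀ - (1 + Complex.I) * cπ + 2 * Complex.I * c₁ = 0 := by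
    rcases mul_eq_zero.mp r2 with h | h
    · exact h
    · exact absurd h (ip_self_ne_zero hb0)
  have hc01 : c₀ = c₁ := by
    refine mul_left_cancel₀ hone ?_
    linear_combination (1/2) * r1' + (1/2) * r2'
  have hcπ1 : cπ = c₁ := by
    refine mul_left_cancel₀ htwo ?_
    linear_combination (1/2) * r1' - (1/2) * r2'
  have hc0π : cπ = c₀ := hcπ1.trans hc01.symm
  have ea'2 : ∀ t, a' t = c₀ * a t := fun t => by
    linear_combination (1/2) * E0' t + (1/2) * Eπ' t + ((a t - b t)/2) * hc0π
  have eb'2 : ∀ t, b' t = c₀ * b t := fun t => by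
    linear_combination (1/2) * E0' t - (1/2) * Eπ' t + ((b t - a t)/2) * hc0π
  left
  refine ⟨c₀, hc₀n, ?_⟩
  funext s
  have h1 := hrec φ s
  have h2 := hrec φ' s
  rw [← ha_def, ← hb_def] at h1
  rw [← ha'_def, ← hb'_def] at h2
  rw [Pi.smul_apply, smul_eq_mul]
  linear_combination h2 - c₀ * h1 + plusVec P (s u) * ea'2 (fun v => s ↑v)
    + minusVec P (s u) * eb'2 (fun v => s ↑v)
end

section
/- Let |φ⟩ be a state of a finite register V of qubits, u ∈ V, λ a two-element subset of {X,Y,Z} with complementary Pauli P, and C a multi-qubit Pauli operator not acting on u. If for all angles α, ⟨+^λ_α|_u |φ⟩ ≃ C ⟨−^λ_α|_u |φ⟩ (equality up to global phase) and |⟨+^λ_α|_u|φ⟩| = 1/√2, then |φ⟩ ≃ (C ⊗ P_u) |φ⟩. -/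
/-- Pauli `X` applied on every qubit of `A`. -/
def Xop {V : Type*} [DecidableEq V] (A : Finset V) (ψ : (V → Fin 2) → ℂ) : (V → Fin 2) → ℂ :=
  fun s => ψ fun v => if v ∈ A then s v + 1 else s v

/-- Pauli `Z` applied on every qubit of `B`. -/
def Zop {V : Type*} [DecidableEq V] (B : Finset V) (ψ : (V → Fin 2) → ℂ) : (V → Fin 2) → ℂ :=
  fun s => (-1 : ℂ) ^ (B.filter fun v => s v = 1).card * ψ s

/-- The single-qubit Pauli `P` applied on qubit `u`. -/
noncomputable def pauliAt {V : Type*} [DecidableEq V] (u : V) (P : Fin 3)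
    (φ : (V → Fin 2) → ℂ) : (V → Fin 2) → ℂ :=
  fun s => ∑ b : Fin 2, pauliMat P (s u) b * φ (Function.update s u b)


section AuxLemmas
open Complex Finset


noncomputable def pinner {ι : Type*} [Fintype ι] (ψ χ : ι → ℂ) : ℂ :=
  ∑ t, (starRingEnd ℂ) (ψ t) * χ t

lemma pinner_self {ι : Type*} [Fintype ι] (ψ : ι → ℂ) : pinner ψ ψ = (norm2 ψ : ℂ) := by
  simp only [pinner, norm2]
  push_cast
  apply Finset.sum_congr rfl
  intro t _
  rw [mul_comm, Complex.mul_conj']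

lemma pinner_conj {ι : Type*} [Fintype ι] (ψ χ : ι → ℂ) :
    pinner χ ψ = (starRingEnd ℂ) (pinner ψ χ) := by
  simp only [pinner, map_sum, map_mul, Complex.conj_conj]
  exact Finset.sum_congr rfl fun t _ => mul_comm _ _

lemma pinner_expand {ι : Type*} [Fintype ι] (f g : ι → ℂ) (z w : ℂ) :
    pinner (f + z • g) (f + w • g)
      = pinner f f + w * pinner f g + (starRingEnd ℂ) z * pinner g f
        + (starRingEnd ℂ) z * w * pinner g g := by
  simp only [pinner, Pi.add_apply, Pi.smul_apply, smul_eq_mul, map_add, map_mul]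
  rw [Finset.mul_sum, Finset.mul_sum, Finset.mul_sum, ← Finset.sum_add_distrib,
    ← Finset.sum_add_distrib, ← Finset.sum_add_distrib]
  exact Finset.sum_congr rfl fun t _ => by ring

lemma eq_zero_of_norm2_eq_zero {ι : Type*} [Fintype ι] {ψ : ι → ℂ} (h : norm2 ψ = 0) :
    ψ = 0 := by
  funext t
  have h2 : ∀ s ∈ Finset.univ, (0:ℝ) ≤ ‖ψ s‖ ^ 2 := fun s _ => by positivity
  have := (Finset.sum_eq_zero_iff_of_nonneg h2).1 h t (Finset.mem_univ t)
  simpa using this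

lemma norm2_smul {ι : Type*} [Fintype ι] (a : ℂ) (ψ : ι → ℂ) :
    norm2 (a • ψ) = ‖a‖ ^ 2 * norm2 ψ := by
  simp [norm2, mul_pow, Finset.mul_sum]



lemma fin2_add_one_add_one : ∀ b : Fin 2, b + 1 + 1 = b := by decide

lemma fin2_add_one_eq_one : ∀ b : Fin 2, (b + 1 = 1) ↔ ¬ (b = 1) := by decide

set_option linter.unusedSectionVars false

variable {V : Type*} [Fintype V] [DecidableEq V]

lemma XZ_add (A B : Finset V) (ψ χ : (V → Fin 2) → ℂ) :
    Xop A (Zop B (ψ + χ)) = Xop A (Zop B ψ) + Xop A (Zop B χ) := by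
  funext s; simp [Xop, Zop]; ring

lemma XZ_smul (A B : Finset V) (a : ℂ) (ψ : (V → Fin 2) → ℂ) :
    Xop A (Zop B (a • ψ)) = a • Xop A (Zop B ψ) := by
  funext s; simp [Xop, Zop]; ring

lemma XZ_neg (A B : Finset V) (ψ : (V → Fin 2) → ℂ) :
    Xop A (Zop B (-ψ)) = -(Xop A (Zop B ψ)) := by
  funext s; simp [Xop, Zop]

lemma XZ_zero (A B : Finset V) : Xop A (Zop B (0 : (V → Fin 2) → ℂ)) = 0 := by
  funext s; simp [Xop, Zop]

/-- flip of flip is the identity -/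
lemma flipA_flip (A : Finset V) (s : V → Fin 2) :
    (fun v => if v ∈ A then (if v ∈ A then s v + 1 else s v) + 1 else
      (if v ∈ A then s v + 1 else s v)) = s := by
  funext v; by_cases h : v ∈ A <;> simp [h, fin2_add_one_add_one]

lemma card_filter_flip (A B : Finset V) (s : V → Fin 2) :
    (B.filter fun v => (if v ∈ A then s v + 1 else s v) = 1).card
      + (B.filter fun v => s v = 1).card
    = (A ∩ B).card + 2 * ((B \ A).filter fun v => s v = 1).card := by
  classical
  have hBsplit : B = (B ∩ A) ∪ (B \ A) := by
    ext v; simp only [Finset.mem_union, Finset.mem_inter, Finset.mem_sdiff]; tauto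
  have hdisj : Disjoint (B ∩ A) (B \ A) := (Finset.disjoint_sdiff_inter B A).symm
  have hsplitc : ∀ (p : V → Prop) (_ : DecidablePred p),
      (B.filter p).card = ((B ∩ A).filter p).card + ((B \ A).filter p).card := by
    intro p hp
    conv_lhs => rw [hBsplit]
    rw [Finset.filter_union,
      Finset.card_union_of_disjoint (Finset.disjoint_filter_filter hdisj)]
  rw [hsplitc _ inferInstance, hsplitc _ inferInstance]
  have h1 : ((B ∩ A).filter fun v => (if v ∈ A then s v + 1 else s v) = 1)
      = ((B ∩ A).filter fun v => ¬ (s v = 1)) := by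
    apply Finset.filter_congr; intro v hv
    have hvA : v ∈ A := (Finset.mem_inter.1 hv).2
    simp only [hvA, if_true]
    exact fin2_add_one_eq_one (s v)
  have h2 : ((B \ A).filter fun v => (if v ∈ A then s v + 1 else s v) = 1)
      = ((B \ A).filter fun v => s v = 1) := by
    apply Finset.filter_congr; intro v hv
    have hvA : v ∉ A := (Finset.mem_sdiff.1 hv).2
    simp [hvA]
  rw [h1, h2]
  have h3 := Finset.card_filter_add_card_filter_not
    (s := B ∩ A) (p := fun v => s v = 1)
  rw [Finset.inter_comm A B]
  omega

lemma XZ_XZ (A B : Finset V) (ψ : (V → Fin 2) → ℂ) :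
    Xop A (Zop B (Xop A (Zop B ψ))) = ((-1 : ℂ) ^ (A ∩ B).card) • ψ := by
  funext s
  simp only [Xop, Zop, Pi.smul_apply, smul_eq_mul]
  have hcard : (B.filter fun v => (if v ∈ A then (if v ∈ A then s v + 1 else s v) + 1 else
      (if v ∈ A then s v + 1 else s v)) = 1) = (B.filter fun v => s v = 1) := by
    apply Finset.filter_congr; intro v _
    by_cases h : v ∈ A <;> simp [h, fin2_add_one_add_one]
  rw [hcard, flipA_flip, ← mul_assoc, ← pow_add, card_filter_flip A B s, pow_add, pow_mul]
  norm_num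

noncomputable def pinner' {ι : Type*} [Fintype ι] (ψ χ : ι → ℂ) : ℂ :=
  ∑ t, (starRingEnd ℂ) (ψ t) * χ t

def flipEquiv (A : Finset V) : Equiv.Perm (V → Fin 2) where
  toFun s := fun v => if v ∈ A then s v + 1 else s v
  invFun s := fun v => if v ∈ A then s v + 1 else s v
  left_inv s := flipA_flip A s
  right_inv s := flipA_flip A s

lemma pinner_XZ (A B : Finset V) (ψ χ : (V → Fin 2) → ℂ) :
    pinner' (Xop A (Zop B ψ)) (Xop A (Zop B χ)) = pinner' ψ χ := by
  unfold pinner'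
  apply Fintype.sum_equiv (flipEquiv A)
  intro s
  have key : ∀ (x y : ℂ) (n : ℕ),
      (starRingEnd ℂ) ((-1) ^ n * x) * ((-1) ^ n * y) = (starRingEnd ℂ) x * y := by
    intro x y n
    have h : ((-1 : ℂ) ^ n) * ((-1) ^ n) = 1 := by rw [← mul_pow]; norm_num
    simp only [map_mul, map_pow, map_neg, map_one]
    linear_combination ((starRingEnd ℂ) x * y) * h
  exact key (ψ fun v => if v ∈ A then s v + 1 else s v)
    (χ fun v => if v ∈ A then s v + 1 else s v) _

end AuxLemmas

section Aux2
set_option linter.unusedSectionVars false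
open Complex Finset
variable {V : Type*} [Fintype V] [DecidableEq V]

lemma card_filter_subtype (u : V) (B : Finset V) (hB : u ∉ B) (s : V → Fin 2) :
    (B.filter fun v => s v = 1).card
      = ((B.subtype (fun v => v ≠ u)).filter fun v => s v.1 = 1).card := by
  symm
  apply Finset.card_bij (fun (v : {v : V // v ≠ u}) _ => v.1)
  · intro a ha
    simp only [Finset.mem_filter, Finset.mem_subtype] at ha
    exact Finset.mem_filter.2 ha
  · intro a _ b _ h
    exact Subtype.ext h
  · intro b hb
    simp only [Finset.mem_filter] at hb
    have hbu : b ≠ u := fun h => hB (h ▸ hb.1)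
    exact ⟨⟨b, hbu⟩, Finset.mem_filter.2 ⟨Finset.mem_subtype.2 hb.1, hb.2⟩, rfl⟩

lemma XZ_tensor (u : V) (A B : Finset V) (hA : u ∉ A) (hB : u ∉ B)
    (h : Fin 2 → ℂ) (F : ({v : V // v ≠ u} → Fin 2) → ℂ) (ξ : (V → Fin 2) → ℂ)
    (hξ : ∀ s, ξ s = h (s u) * F (fun v => s v.1)) (s : V → Fin 2) :
    Xop A (Zop B ξ) s
      = h (s u) * Xop (A.subtype (fun v => v ≠ u)) (Zop (B.subtype (fun v => v ≠ u)) F)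
          (fun v => s v.1) := by
  simp only [Xop, Zop]
  rw [hξ, if_neg hA, card_filter_subtype u B hB]
  have hcfg : (fun (v : {v : V // v ≠ u}) => (if v.1 ∈ A then s v.1 + 1 else s v.1))
      = (fun (v : {v : V // v ≠ u}) =>
          if v ∈ A.subtype (fun w => w ≠ u) then s v.1 + 1 else s v.1) := by
    funext v; by_cases hv : v.1 ∈ A <;> simp [Finset.mem_subtype, hv]
  have hcard2 : ((B.subtype (fun v => v ≠ u)).filter fun v =>
        (if v.1 ∈ A then s v.1 + 1 else s v.1) = 1)
      = ((B.subtype (fun v => v ≠ u)).filter fun v =>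
          (if v ∈ A.subtype (fun w => w ≠ u) then s v.1 + 1 else s v.1) = 1) := by
    apply Finset.filter_congr
    intro v _
    by_cases hv : v.1 ∈ A <;> simp [Finset.mem_subtype, hv]
  rw [hcfg, hcard2]
  ring

lemma partialInner_XZ (u : V) (A B : Finset V) (hA : u ∉ A) (hB : u ∉ B)
    (χ : Fin 2 → ℂ) (φ : (V → Fin 2) → ℂ) :
    partialInner u χ (Xop A (Zop B φ))
      = Xop (A.subtype (fun v => v ≠ u)) (Zop (B.subtype (fun v => v ≠ u))
          (partialInner u χ φ)) := by
  funext t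
  simp only [partialInner, Xop, Zop, Finset.mul_sum]
  apply Finset.sum_congr rfl
  intro b _
  have h1 : (fun v => if v ∈ A then (if h : v = u then b else t ⟨v, h⟩) + 1
        else if h : v = u then b else t ⟨v, h⟩)
      = (fun v => if h : v = u then b else
          if (⟨v, h⟩ : {w : V // w ≠ u}) ∈ A.subtype (fun x => x ≠ u) then t ⟨v, h⟩ + 1
          else t ⟨v, h⟩) := by
    funext v
    by_cases hv : v = u
    · subst hv; simp [hA]
    · by_cases hvA : v ∈ A <;> simp [hv, hvA, Finset.mem_subtype]
  have h2 : (B.filter fun v => (if v ∈ A then (if h : v = u then b else t ⟨v, h⟩) + 1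
        else if h : v = u then b else t ⟨v, h⟩) = 1).card
      = ((B.subtype (fun v => v ≠ u)).filter fun v =>
          (if v ∈ A.subtype (fun x => x ≠ u) then t v + 1 else t v) = 1).card := by
    rw [card_filter_subtype u B hB]
    apply congrArg
    apply Finset.filter_congr
    intro v _
    by_cases hvA : v.1 ∈ A <;> simp [v.2, hvA, Finset.mem_subtype]
  rw [h2]
  conv_lhs => rw [h1]
  ring

lemma sqrt2C_mul_self : (Real.sqrt 2 : ℂ) * (Real.sqrt 2 : ℂ) = 2 := by
  norm_cast
  rw [Real.mul_self_sqrt (by norm_num)]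

lemma sqrt2C_ne_zero : (Real.sqrt 2 : ℂ) ≠ 0 := by
  intro h
  have := sqrt2C_mul_self
  rw [h, mul_zero] at this
  norm_num at this

lemma inv_sqrt2C_ne_zero : (Real.sqrt 2 : ℂ)⁻¹ ≠ 0 := inv_ne_zero sqrt2C_ne_zero

lemma inv_sqrt2C_mul_self : (Real.sqrt 2 : ℂ)⁻¹ * (Real.sqrt 2 : ℂ)⁻¹ = 2⁻¹ := by
  rw [← mul_inv, sqrt2C_mul_self]

lemma conj_of_norm_one {c : ℂ} (h : ‖c‖ = 1) : (starRingEnd ℂ) c * c = 1 := by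
  rw [mul_comm, Complex.mul_conj']
  norm_cast
  rw [h]; norm_num

set_option maxHeartbeats 1000000 in
lemma basis_complete (P : Fin 3) (a b : Fin 2) :
    plusVec P a * (starRingEnd ℂ) (plusVec P b) + minusVec P a * (starRingEnd ℂ) (minusVec P b)
      = if a = b then 1 else 0 := by
  have h := inv_sqrt2C_mul_self
  fin_cases P <;> fin_cases a <;> fin_cases b <;>
    simp [plusVec, minusVec, map_inv₀, Complex.conj_ofReal, map_mul, Complex.conj_I] <;>
    (first
      | ring1
      | linear_combination (2:ℂ) * h
      | linear_combination (-2:ℂ) * h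
      | linear_combination (-2*((Real.sqrt 2:ℂ)⁻¹)^2) * Complex.I_sq
      | linear_combination (2*((Real.sqrt 2:ℂ)⁻¹)^2) * Complex.I_sq
      | linear_combination (2:ℂ) * h - 2*((Real.sqrt 2:ℂ)⁻¹)^2 * Complex.I_sq
      | linear_combination (2:ℂ) * h + 2*((Real.sqrt 2:ℂ)⁻¹)^2 * Complex.I_sq
      | linear_combination (-2:ℂ) * h - 2*((Real.sqrt 2:ℂ)⁻¹)^2 * Complex.I_sq
      | linear_combination (-((Real.sqrt 2:ℂ)⁻¹)) * Complex.I_sq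
      | linear_combination ((Real.sqrt 2:ℂ)⁻¹) * Complex.I_sq)

lemma pauli_plus (P : Fin 3) (a : Fin 2) :
    ∑ b : Fin 2, pauliMat P a b * plusVec P b = plusVec P a := by
  fin_cases P <;> fin_cases a <;>
    simp [pauliMat, plusVec, Fin.sum_univ_two] <;>
    (first
      | ring1
      | linear_combination (2:ℂ) * h
      | linear_combination (-2:ℂ) * h
      | linear_combination (-2*((Real.sqrt 2:ℂ)⁻¹)^2) * Complex.I_sq
      | linear_combination (2*((Real.sqrt 2:ℂ)⁻¹)^2) * Complex.I_sq
      | linear_combination (2:ℂ) * h - 2*((Real.sqrt 2:ℂ)⁻¹)^2 * Complex.I_sq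
      | linear_combination (2:ℂ) * h + 2*((Real.sqrt 2:ℂ)⁻¹)^2 * Complex.I_sq
      | linear_combination (-2:ℂ) * h - 2*((Real.sqrt 2:ℂ)⁻¹)^2 * Complex.I_sq
      | linear_combination (-((Real.sqrt 2:ℂ)⁻¹)) * Complex.I_sq
      | linear_combination ((Real.sqrt 2:ℂ)⁻¹) * Complex.I_sq)

lemma pauli_minus (P : Fin 3) (a : Fin 2) :
    ∑ b : Fin 2, pauliMat P a b * minusVec P b = -(minusVec P a) := by
  fin_cases P <;> fin_cases a <;>
    simp [pauliMat, minusVec, Fin.sum_univ_two] <;>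
    (first
      | ring1
      | linear_combination (2:ℂ) * h
      | linear_combination (-2:ℂ) * h
      | linear_combination (-2*((Real.sqrt 2:ℂ)⁻¹)^2) * Complex.I_sq
      | linear_combination (2*((Real.sqrt 2:ℂ)⁻¹)^2) * Complex.I_sq
      | linear_combination (2:ℂ) * h - 2*((Real.sqrt 2:ℂ)⁻¹)^2 * Complex.I_sq
      | linear_combination (2:ℂ) * h + 2*((Real.sqrt 2:ℂ)⁻¹)^2 * Complex.I_sq
      | linear_combination (-2:ℂ) * h - 2*((Real.sqrt 2:ℂ)⁻¹)^2 * Complex.I_sq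
      | linear_combination (-((Real.sqrt 2:ℂ)⁻¹)) * Complex.I_sq
      | linear_combination ((Real.sqrt 2:ℂ)⁻¹) * Complex.I_sq)

lemma decomp (u : V) (P : Fin 3) (φ : (V → Fin 2) → ℂ) (s : V → Fin 2) :
    φ s = plusVec P (s u) * partialInner u (plusVec P) φ (fun v => s v.1)
      + minusVec P (s u) * partialInner u (minusVec P) φ (fun v => s v.1) := by
  simp only [partialInner, Finset.mul_sum]
  rw [← Finset.sum_add_distrib]
  have h1 : ∀ b : Fin 2,
      plusVec P (s u) * ((starRingEnd ℂ) (plusVec P b)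
          * φ (fun v => if h : v = u then b else s v))
        + minusVec P (s u) * ((starRingEnd ℂ) (minusVec P b)
          * φ (fun v => if h : v = u then b else s v))
      = (if s u = b then 1 else 0) * φ (fun v => if h : v = u then b else s v) := by
    intro b
    rw [← basis_complete P (s u) b]
    ring
  rw [Finset.sum_congr rfl (fun b _ => h1 b)]
  have hrec : (fun v => if v = u then s u else s v) = s := by
    funext v; by_cases h : v = u <;> simp [h]
  simp [ite_mul, Finset.sum_ite_eq, hrec]

lemma pauliAt_decomp (u : V) (P : Fin 3) (φ : (V → Fin 2) → ℂ) (s : V → Fin 2) :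
    pauliAt u P φ s
      = plusVec P (s u) * partialInner u (plusVec P) φ (fun v => s v.1)
        - minusVec P (s u) * partialInner u (minusVec P) φ (fun v => s v.1) := by
  unfold pauliAt
  have hupd : ∀ b : Fin 2,
      (fun (v : {v : V // v ≠ u}) => Function.update s u b v.1) = (fun v => s v.1) := by
    intro b; funext v; exact Function.update_of_ne v.2 b s
  have h1 : ∀ b : Fin 2, φ (Function.update s u b)
      = plusVec P b * partialInner u (plusVec P) φ (fun v => s v.1)
        + minusVec P b * partialInner u (minusVec P) φ (fun v => s v.1) := by
    intro b
    have h := decomp u P φ (Function.update s u b)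
    rwa [Function.update_self, hupd b] at h
  rw [Finset.sum_congr rfl (fun b _ => by rw [h1 b])]
  have h2 : ∑ b : Fin 2, pauliMat P (s u) b
        * (plusVec P b * partialInner u (plusVec P) φ (fun v => s v.1)
          + minusVec P b * partialInner u (minusVec P) φ (fun v => s v.1))
      = (∑ b : Fin 2, pauliMat P (s u) b * plusVec P b)
          * partialInner u (plusVec P) φ (fun v => s v.1)
        + (∑ b : Fin 2, pauliMat P (s u) b * minusVec P b)
          * partialInner u (minusVec P) φ (fun v => s v.1) := by
    rw [Finset.sum_mul, Finset.sum_mul, ← Finset.sum_add_distrib]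
    exact Finset.sum_congr rfl fun b _ => by ring
  rw [h2, pauli_plus, pauli_minus]
  ring

lemma partialInner_planePlus (u : V) (P : Fin 3) (α : ℝ) (φ : (V → Fin 2) → ℂ) :
    partialInner u (planePlus P α) φ
      = (Real.sqrt 2 : ℂ)⁻¹ • (partialInner u (plusVec P) φ
          + (starRingEnd ℂ) (Complex.exp (α * Complex.I)) • partialInner u (minusVec P) φ) := by
  funext t
  simp only [partialInner, planePlus, Pi.smul_apply, Pi.add_apply, smul_eq_mul,
    map_mul, map_add, map_inv₀, Complex.conj_ofReal, mul_add, Finset.mul_sum]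
  rw [← Finset.sum_add_distrib]
  exact Finset.sum_congr rfl fun b _ => by ring

lemma partialInner_planeMinus (u : V) (P : Fin 3) (α : ℝ) (φ : (V → Fin 2) → ℂ) :
    partialInner u (planeMinus P α) φ
      = (Real.sqrt 2 : ℂ)⁻¹ • (partialInner u (plusVec P) φ
          - (starRingEnd ℂ) (Complex.exp (α * Complex.I)) • partialInner u (minusVec P) φ) := by
  funext t
  simp only [partialInner, planeMinus, Pi.smul_apply, Pi.sub_apply, smul_eq_mul,
    map_mul, map_sub, map_inv₀, Complex.conj_ofReal, mul_sub, Finset.mul_sum]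
  rw [← Finset.sum_sub_distrib]
  exact Finset.sum_congr rfl fun b _ => by ring

end Aux2

lemma pinner_smul_right {ι : Type*} [Fintype ι] (ψ χ : ι → ℂ) (a : ℂ) :
    pinner ψ (a • χ) = a * pinner ψ χ := by
  simp only [pinner, Pi.smul_apply, smul_eq_mul, Finset.mul_sum]
  exact Finset.sum_congr rfl fun t _ => by ring

open Complex in
lemma endgame {ι : Type*} [Fintype ι] (C : (ι → ℂ) → (ι → ℂ))
    (Cadd : ∀ x y, C (x + y) = C x + C y)
    (Csmul : ∀ (a : ℂ) x, C (a • x) = a • C x)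
    (f g : ι → ℂ)
    (hE₁ : ∃ c : ℂ, ‖c‖ = 1 ∧ f + g = c • C (f - g))
    (hE₂ : ∃ c : ℂ, ‖c‖ = 1 ∧ f - g = c • C (f + g))
    (hE₃ : ∃ c : ℂ, ‖c‖ = 1 ∧ f - Complex.I • g = c • C (f + Complex.I • g))
    (N₁ : pinner (f + g) (f + g) = 1)
    (N₂ : pinner (f - g) (f - g) = 1)
    (N₃ : pinner (f - Complex.I • g) (f - Complex.I • g) = 1)
    (N₄ : pinner (f + Complex.I • g) (f + Complex.I • g) = 1) :
    ∃ c : ℂ, ‖c‖ = 1 ∧ f = c • C f ∧ g = (-c) • C g := by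
  obtain ⟨d₁, hd₁, E₁⟩ := hE₁
  obtain ⟨d₂, hd₂, E₂⟩ := hE₂
  obtain ⟨d₃, hd₃, E₃⟩ := hE₃
  have hC0 : C 0 = 0 := by have := Csmul 0 0; simpa using this
  have hCneg : ∀ x, C (-x) = -(C x) := by
    intro x; have := Csmul (-1) x; simpa using this
  -- rewrite combos in z-form
  have e1 : f + g = f + (1:ℂ) • g := by rw [one_smul]
  have e2 : f - g = f + (-1:ℂ) • g := by module
  have e3 : f - Complex.I • g = f + (-Complex.I) • g := by module
  have e4 : f + Complex.I • g = f + (Complex.I) • g := rfl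
  -- expanded norms
  have X₁ := N₁; rw [e1, pinner_expand] at X₁
  have X₂ := N₂; rw [e2, pinner_expand] at X₂
  have X₃ := N₃; rw [e3, pinner_expand] at X₃
  have X₄ := N₄; rw [e4, pinner_expand] at X₄
  simp only [map_one, map_neg, Complex.conj_I, Complex.I_mul_I, one_mul, mul_one,
    neg_one_mul, neg_neg, neg_mul, mul_neg] at X₁ X₂ X₃ X₄
  have hp : pinner f g = 0 := by
    linear_combination (X₁ - X₂)/4 - Complex.I * (X₄ - X₃)/4
      + ((pinner f g - pinner g f)/2) * Complex.I_sq
  have hq : pinner g f = 0 := by rw [pinner_conj, hp, map_zero]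
  have hab : pinner f f + pinner g g = 1 := by linear_combination X₁ - hp - hq
  -- C relations
  have hCu₂ : C (f - g) = (starRingEnd ℂ) d₁ • (f + g) := by
    have h := congrArg (fun x => (starRingEnd ℂ) d₁ • x) E₁
    rw [smul_smul, conj_of_norm_one hd₁, one_smul] at h
    exact h.symm
  have hCu₁ : C (f + g) = (starRingEnd ℂ) d₂ • (f - g) := by
    have h := congrArg (fun x => (starRingEnd ℂ) d₂ • x) E₂
    rw [smul_smul, conj_of_norm_one hd₂, one_smul] at h
    exact h.symm
  -- star equation
  have h3r : f + Complex.I • g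
      = ((1 + Complex.I)/2) • (f + g) + ((1 - Complex.I)/2) • (f - g) := by module
  have hstar : ((1 - Complex.I)/2 - d₃ * ((1 - Complex.I)/2 * (starRingEnd ℂ) d₁)) • (f + g)
      = (d₃ * ((1 + Complex.I)/2 * (starRingEnd ℂ) d₂) - (1 + Complex.I)/2) • (f - g) := by
    have h := E₃
    rw [h3r, Cadd, Csmul, Csmul, hCu₁, hCu₂, smul_smul, smul_smul] at h
    have h' : f - Complex.I • g
        = (d₃ * ((1 + Complex.I)/2 * (starRingEnd ℂ) d₂)) • (f - g)
          + (d₃ * ((1 - Complex.I)/2 * (starRingEnd ℂ) d₁)) • (f + g) := by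
      rw [h]; module
    linear_combination (norm := module) h'
  have hS : pinner (f + g) (f - g) = pinner f f - pinner g g := by
    rw [e1, e2, pinner_expand, hp, hq]
    simp only [map_one, map_neg, Complex.conj_I, one_mul, mul_one, neg_one_mul, mul_zero,
      add_zero, zero_add, sub_zero]
    ring
  have hS' : pinner (f - g) (f + g) = pinner f f - pinner g g := by
    rw [e1, e2, pinner_expand, hp, hq]
    simp only [map_one, map_neg, Complex.conj_I, one_mul, mul_one, neg_one_mul, mul_zero,
      add_zero, zero_add, sub_zero]
    ring
  have hB1 := congrArg (pinner (f + g)) hstar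
  rw [pinner_smul_right, pinner_smul_right, N₁, hS] at hB1
  have hB2 := congrArg (pinner (f - g)) hstar
  rw [pinner_smul_right, pinner_smul_right, hS', N₂] at hB2
  set a := pinner f f
  set b := pinner g g
  by_cases hcase : (a - b) * (a - b) = 1
  · -- degenerate case : f = 0 or g = 0
    have haR : a = (norm2 f : ℂ) := pinner_self f
    have hbR : b = (norm2 g : ℂ) := pinner_self g
    have hr2 : (norm2 f - norm2 g) * (norm2 f - norm2 g) = 1 := by
      have h := hcase
      rw [haR, hbR] at h
      exact_mod_cast h
    have hr1 : norm2 f + norm2 g = 1 := by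
      have h := hab
      rw [haR, hbR] at h
      exact_mod_cast h
    have hfg0 : norm2 g = 0 ∨ norm2 f = 0 := by
      rcases mul_self_eq_one_iff.1 hr2 with h | h
      · left; linarith
      · right; linarith
    rcases hfg0 with h0 | h0
    · have hg : g = 0 := eq_zero_of_norm2_eq_zero h0
      refine ⟨d₁, hd₁, ?_, ?_⟩
      · have h := E₁
        rw [hg, add_zero, sub_zero] at h
        exact h
      · rw [hg, hC0, smul_zero]
    · have hf : f = 0 := eq_zero_of_norm2_eq_zero h0
      refine ⟨d₁, hd₁, ?_, ?_⟩
      · rw [hf, hC0, smul_zero]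
      · have h := E₁
        rw [hf, zero_add, zero_sub] at h
        rw [neg_smul, ← smul_neg, ← hCneg g]
        exact h
  · -- main case
    have hβ : ((1 - Complex.I)/2 - d₃ * ((1 - Complex.I)/2 * (starRingEnd ℂ) d₁)) = 0 := by
      have h5 : ((1 - Complex.I)/2 - d₃ * ((1 - Complex.I)/2 * (starRingEnd ℂ) d₁))
          * (1 - (a - b) * (a - b)) = 0 := by
        linear_combination hB1 - (a - b) * hB2
      rcases mul_eq_zero.1 h5 with h | h
      · exact h
      · exact absurd (by linear_combination -h) hcase
    have hγ : (d₃ * ((1 + Complex.I)/2 * (starRingEnd ℂ) d₂) - (1 + Complex.I)/2) = 0 := by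
      linear_combination -hB2 + (a - b) * hβ
    have h1I : (1 - Complex.I)/2 ≠ 0 := by
      simp only [div_ne_zero_iff, sub_ne_zero]
      constructor
      · intro h; have := congrArg Complex.im h; simp at this
      · norm_num
    have h2I : (1 + Complex.I)/2 ≠ 0 := by
      simp only [div_ne_zero_iff]
      constructor
      · intro h; have := congrArg Complex.im h; simp at this
      · norm_num
    have hx1 : d₃ * (starRingEnd ℂ) d₁ = 1 := by
      have h : (1 - Complex.I)/2 * (1 - d₃ * (starRingEnd ℂ) d₁) = 0 := by
        linear_combination hβ
      rcases mul_eq_zero.1 h with h | h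
      · exact absurd h h1I
      · linear_combination -h
    have hx2 : d₃ * (starRingEnd ℂ) d₂ = 1 := by
      have h : (1 + Complex.I)/2 * (1 - d₃ * (starRingEnd ℂ) d₂) = 0 := by
        linear_combination -hγ
      rcases mul_eq_zero.1 h with h | h
      · exact absurd h h2I
      · linear_combination -h
    have hd₃ne : d₃ ≠ 0 := by
      intro h; rw [h] at hd₃; simp at hd₃
    have hd12 : d₁ = d₂ := by
      have h := mul_left_cancel₀ hd₃ne (hx1.trans hx2.symm)
      have h2 := congrArg (starRingEnd ℂ) h
      simpa [Complex.conj_conj] using h2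
    refine ⟨d₁, hd₁, ?_, ?_⟩
    · have hf2 : f = (1/2 : ℂ) • (f + g) + (1/2 : ℂ) • (f - g) := by module
      have hCf : C f = (starRingEnd ℂ) d₁ • f := by
        conv_lhs => rw [hf2, Cadd, Csmul, Csmul, hCu₁, hCu₂, ← hd12]
        conv_rhs => rw [hf2]
        module
      rw [hCf, smul_smul, mul_comm, conj_of_norm_one hd₁, one_smul]
    · have hg2 : g = (1/2 : ℂ) • (f + g) - (1/2 : ℂ) • (f - g) := by module
      have hCg : C g = -((starRingEnd ℂ) d₁ • g) := by
        have hg3 : g = (1/2 : ℂ) • (f + g) + (-(1/2) : ℂ) • (f - g) := by module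
        conv_lhs => rw [hg3, Cadd, Csmul, Csmul, hCu₁, hCu₂, ← hd12]
        conv_rhs => rw [hg3]
        module
      rw [hCg, smul_neg, neg_smul, neg_neg, smul_smul, mul_comm, conj_of_norm_one hd₁,
        one_smul]

/-- If for all angles `α`, `⟨+^λ_α|_u |φ⟩ ≃ C ⟨−^λ_α|_u |φ⟩` for a multi-qubit Pauli
`C = X_A Z_B` not acting on `u`, with all outcome probabilities `1/2`, then
`|φ⟩ ≃ (C ⊗ P_u) |φ⟩`, where `P` is the Pauli complementary to the plane `λ`. -/
theorem stmt7 {V : Type*} [Fintype V] [DecidableEq V] (u : V) (P : Fin 3)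
    (A B : Finset V) (hA : u ∉ A) (hB : u ∉ B)
    (φ : (V → Fin 2) → ℂ) (hφ : norm2 φ = 1)
    (hsim : ∀ α : ℝ, ∃ c : ℂ, ‖c‖ = 1 ∧
      partialInner u (planePlus P α) φ
        = c • partialInner u (planeMinus P α) (Xop A (Zop B φ)))
    (hhalf : ∀ α : ℝ, norm2 (partialInner u (planePlus P α) φ) = 1 / 2) :
    ∃ c : ℂ, ‖c‖ = 1 ∧ φ = c • Xop A (Zop B (pauliAt u P φ)) := by
  classical
  set A' : Finset {v : V // v ≠ u} := A.subtype (fun v => v ≠ u) with hA'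
  set B' : Finset {v : V // v ≠ u} := B.subtype (fun v => v ≠ u) with hB'
  have hE : ∀ α : ℝ, ∃ c : ℂ, ‖c‖ = 1 ∧
      partialInner u (plusVec P) φ
          + (starRingEnd ℂ) (Complex.exp (↑α * Complex.I)) • partialInner u (minusVec P) φ
        = c • Xop A' (Zop B' (partialInner u (plusVec P) φ
            - (starRingEnd ℂ) (Complex.exp (↑α * Complex.I))
              • partialInner u (minusVec P) φ)) := by
    intro α
    obtain ⟨c, hc, h⟩ := hsim α
    refine ⟨c, hc, ?_⟩
    rw [partialInner_planePlus, partialInner_XZ u A B hA hB, partialInner_planeMinus,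
      XZ_smul] at h
    rw [smul_comm c] at h
    exact smul_right_injective _ inv_sqrt2C_ne_zero h
  have hn : ‖(Real.sqrt 2 : ℂ)⁻¹‖ ^ 2 = 1/2 := by
    rw [norm_inv, Complex.norm_real, Real.norm_eq_abs,
      abs_of_nonneg (Real.sqrt_nonneg 2), inv_pow, Real.sq_sqrt (by norm_num : (0:ℝ) ≤ 2)]
    norm_num
  have hN : ∀ α : ℝ, pinner
      (partialInner u (plusVec P) φ
        + (starRingEnd ℂ) (Complex.exp (↑α * Complex.I)) • partialInner u (minusVec P) φ)
      (partialInner u (plusVec P) φ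
        + (starRingEnd ℂ) (Complex.exp (↑α * Complex.I)) • partialInner u (minusVec P) φ)
      = 1 := by
    intro α
    have h := hhalf α
    rw [partialInner_planePlus, norm2_smul, hn] at h
    have h2 : norm2 (partialInner u (plusVec P) φ
        + (starRingEnd ℂ) (Complex.exp (↑α * Complex.I))
          • partialInner u (minusVec P) φ) = 1 := by linarith
    rw [pinner_self, h2]
    norm_num
  -- specific angles
  have hIexp : Complex.exp (↑(Real.pi/2 : ℝ) * Complex.I) = Complex.I := by
    rw [Complex.exp_mul_I, ← Complex.ofReal_cos, ← Complex.ofReal_sin,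
      Real.cos_pi_div_two, Real.sin_pi_div_two]
    simp
  have hmIexp : Complex.exp (↑(-(Real.pi/2) : ℝ) * Complex.I) = -Complex.I := by
    rw [Complex.exp_mul_I, ← Complex.ofReal_cos, ← Complex.ofReal_sin,
      Real.cos_neg, Real.sin_neg, Real.cos_pi_div_two, Real.sin_pi_div_two]
    simp
  have H1 := hE 0
  simp only [Complex.ofReal_zero, zero_mul, Complex.exp_zero, map_one, one_smul] at H1
  have H2 := hE Real.pi
  simp only [Complex.exp_pi_mul_I, map_neg, map_one, neg_smul, one_smul,
    sub_neg_eq_add, ← sub_eq_add_neg] at H2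
  have H3 := hE (Real.pi/2)
  simp only [hIexp, Complex.conj_I, neg_smul, sub_neg_eq_add, ← sub_eq_add_neg] at H3
  have N1 := hN 0
  simp only [Complex.ofReal_zero, zero_mul, Complex.exp_zero, map_one, one_smul] at N1
  have N2 := hN Real.pi
  simp only [Complex.exp_pi_mul_I, map_neg, map_one, neg_smul, one_smul,
    sub_neg_eq_add, ← sub_eq_add_neg] at N2
  have N3 := hN (Real.pi/2)
  simp only [hIexp, Complex.conj_I, neg_smul, sub_neg_eq_add, ← sub_eq_add_neg] at N3
  have N4 := hN (-(Real.pi/2))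
  simp only [hmIexp, map_neg, Complex.conj_I, neg_neg] at N4
  obtain ⟨c, hc, hf2, hg2⟩ := endgame (fun ψ => Xop A' (Zop B' ψ))
    (fun x y => XZ_add A' B' x y) (fun a x => XZ_smul A' B' a x)
    (partialInner u (plusVec P) φ) (partialInner u (minusVec P) φ)
    H1 H2 H3 N1 N2 N3 N4
  refine ⟨c, hc, ?_⟩
  funext s
  have hsplit : pauliAt u P φ
      = (fun s' => plusVec P (s' u) * partialInner u (plusVec P) φ (fun v => s' v.1))
        + (fun s' => minusVec P (s' u)
            * (-(partialInner u (minusVec P) φ)) (fun v => s' v.1)) := by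
    funext s'
    simp only [Pi.add_apply, Pi.neg_apply]
    rw [pauliAt_decomp]
    ring
  rw [hsplit, XZ_add, Pi.smul_apply, Pi.add_apply]
  rw [XZ_tensor u A B hA hB (plusVec P) (partialInner u (plusVec P) φ) _ (fun _ => rfl) s,
    XZ_tensor u A B hA hB (minusVec P) (-(partialInner u (minusVec P) φ)) _ (fun _ => rfl) s]
  rw [show Xop A' (Zop B' (-(partialInner u (minusVec P) φ)))
      = -(Xop A' (Zop B' (partialInner u (minusVec P) φ))) from XZ_neg A' B' _]
  rw [decomp u P φ s]
  have h1 := congrFun hf2 (fun v => s v.1)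
  have h2 := congrFun hg2 (fun v => s v.1)
  simp only [Pi.smul_apply, smul_eq_mul, Pi.neg_apply] at h1 h2 ⊢
  rw [h1, h2]
  ring
end

section
/- Let |φ⟩ be a normalized state of a register V of qubits with u ∈ V, written |φ⟩ = |+⟩_u|φ_+⟩ + |−⟩_u|φ_−⟩ (unnormalized components). If for α ∈ {0, π/2, π} the projections ⟨+^{XY}_α|_u|φ⟩ all have norm 1/√2 and |φ_+⟩, |φ_−⟩ are colinear, then there exist x ∈ {0,1} and a state |ψ⟩ such that |φ⟩ = |x⟩_u ⊗ |ψ⟩ up to global phase (i.e. the qubit u is separable and in a Z-eigenstate). -/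
/-- Degenerate case of Lemma `lem:meas`: if `|φ⟩` is normalized, the projections of qubit `u`
onto the XY-plane measurement bras at angles `0, π/2, π` all have norm `1/√2`, and the
components `|φ_+⟩, |φ_−⟩` of `|φ⟩` in the `X`-eigenbasis of qubit `u` are colinear, then
qubit `u` is separable and in a `Z`-eigenstate: `|φ⟩ ≃ |x⟩_u ⊗ |ψ⟩` for some `x ∈ {0,1}`.
(The XY-plane is complementary to the Pauli `Z`, i.e. index `2`; the `X`-eigenvectors are
`plusVec 0` and `minusVec 0`.) -/
theorem stmt12 {V : Type*} [Fintype V] [DecidableEq V] (u : V) (φ : (V → Fin 2) → ℂ)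
    (hφ : norm2 φ = 1)
    (hhalf : ∀ α ∈ ({0, Real.pi / 2, Real.pi} : Set ℝ),
      norm2 (partialInner u (planePlus 2 α) φ) = 1 / 2)
    (hcol : ∃ c : ℂ,
      partialInner u (minusVec 0) φ = c • partialInner u (plusVec 0) φ ∨
      partialInner u (plusVec 0) φ = c • partialInner u (minusVec 0) φ) :
    ∃ (x : Fin 2) (ψ : ({v : V // v ≠ u} → Fin 2) → ℂ) (c : ℂ), ‖c‖ = 1 ∧
      φ = c • tensorAt u (fun b => if b = x then 1 else 0) ψ := by
  classical
  set ext : Fin 2 → ({v : V // v ≠ u} → Fin 2) → (V → Fin 2) :=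
    fun b t v => if h : v = u then b else t ⟨v, h⟩ with hext
  set P : Fin 2 → ({v : V // v ≠ u} → Fin 2) → ℂ := fun b t => φ (ext b t) with hPdef
  have hs2 : ((Real.sqrt 2 : ℂ))⁻¹ ≠ 0 := by
    simp [Real.sqrt_eq_zero']
  -- partial inner formula
  have hPI : ∀ χ : Fin 2 → ℂ, partialInner u χ φ
      = fun t => (starRingEnd ℂ) (χ 0) * P 0 t + (starRingEnd ℂ) (χ 1) * P 1 t := by
    intro χ; funext t
    simp [partialInner, Fin.sum_univ_two, hPdef, hext]
  -- sum splitting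
  have hsum : ∀ f : (V → Fin 2) → ℝ,
      ∑ s, f s = (∑ t, f (ext 0 t)) + (∑ t, f (ext 1 t)) := by
    intro f
    have h1 := Equiv.sum_comp (Equiv.funSplitAt u (Fin 2)).symm f
    rw [← h1, Fintype.sum_prod_type, Fin.sum_univ_two]
    have he : ∀ (b : Fin 2) t, (Equiv.funSplitAt u (Fin 2)).symm (b, t) = ext b t := by
      intro b t; funext v
      by_cases h : v = u
      · subst h; simp [Equiv.funSplitAt, Equiv.piSplitAt, hext]
      · simp [Equiv.funSplitAt, Equiv.piSplitAt, hext, h]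
    simp [he]
  have hns : ∀ z : ℂ, ‖z‖ ^ 2 = Complex.normSq z := by
    intro z; rw [Complex.sq_norm]
  -- total norm
  have hN : (∑ t, Complex.normSq (P 0 t)) + (∑ t, Complex.normSq (P 1 t)) = 1 := by
    have := hsum (fun s => ‖φ s‖ ^ 2)
    rw [norm2] at hφ
    rw [hφ] at this
    simpa [hPdef, Complex.sq_norm] using this.symm
  -- the cross term
  set S : ℂ := ∑ t, P 0 t * (starRingEnd ℂ) (P 1 t) with hSdef
  have hRe : ∀ α : ℝ, norm2 (partialInner u (planePlus 2 α) φ) = 1 / 2 →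
      (Complex.exp (α * Complex.I) * S).re = 0 := by
    intro α hα
    set w : ℂ := Complex.exp (-(↑α * Complex.I)) with hw
    have hwc : (starRingEnd ℂ) w = Complex.exp (↑α * Complex.I) := by
      rw [hw, ← Complex.exp_conj]; congr 1; simp
    have hwc' : (starRingEnd ℂ) (Complex.exp (↑α * Complex.I)) = w := by
      rw [hw, ← Complex.exp_conj]; congr 1; simp
    have hw1 : Complex.normSq w = 1 := by
      rw [Complex.normSq_eq_norm_sq, hw, Complex.norm_exp]; simp
    have hw2 : Complex.normSq ((Real.sqrt 2 : ℂ))⁻¹ = 1 / 2 := by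
      rw [Complex.normSq_inv, Complex.normSq_ofReal,
        Real.mul_self_sqrt (by norm_num)]
      norm_num
    have hplane : ∀ t, partialInner u (planePlus 2 α) φ t
        = ((Real.sqrt 2 : ℂ))⁻¹ * (P 0 t + w * P 1 t) := by
      intro t
      simp only [hPI (planePlus 2 α)]
      have e0 : planePlus 2 α 0 = ((Real.sqrt 2 : ℂ))⁻¹ := by
        simp [planePlus, plusVec, minusVec]
      have e1 : planePlus 2 α 1 = ((Real.sqrt 2 : ℂ))⁻¹ * Complex.exp (↑α * Complex.I) := by
        simp [planePlus, plusVec, minusVec]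
      rw [e0, e1, map_mul, map_inv₀, Complex.conj_ofReal, hwc']
      ring
    have hsumt : norm2 (partialInner u (planePlus 2 α) φ)
        = (1 / 2) * ∑ t, Complex.normSq (P 0 t + w * P 1 t) := by
      rw [norm2, Finset.mul_sum]
      refine Finset.sum_congr rfl fun t _ => ?_
      rw [hplane t, hns, Complex.normSq_mul, hw2]
    have hterm : ∀ t, Complex.normSq (P 0 t + w * P 1 t)
        = Complex.normSq (P 0 t) + Complex.normSq (P 1 t)
          + 2 * ((starRingEnd ℂ) w * (P 0 t * (starRingEnd ℂ) (P 1 t))).re := by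
      intro t
      rw [Complex.normSq_add, Complex.normSq_mul, hw1, one_mul, map_mul]
      congr 2
      ring
    have hexp : ∑ t, Complex.normSq (P 0 t + w * P 1 t)
        = (∑ t, Complex.normSq (P 0 t)) + (∑ t, Complex.normSq (P 1 t))
          + 2 * ((starRingEnd ℂ) w * S).re := by
      rw [Finset.sum_congr rfl fun t _ => hterm t, Finset.sum_add_distrib,
        Finset.sum_add_distrib, ← Finset.mul_sum, ← Complex.re_sum, ← Finset.mul_sum, hSdef]
    rw [hsumt, hexp, hN, hwc] at hα
    linarith [hα]
  have hS : S = 0 := by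
    have h0 := hRe 0 (hhalf 0 (by simp))
    have h1 := hRe (Real.pi / 2) (hhalf (Real.pi / 2) (by simp))
    rw [show ((Real.pi / 2 : ℝ) : ℂ) = (Real.pi : ℂ) / 2 by push_cast; ring,
      Complex.exp_mul_I, Complex.cos_pi_div_two, Complex.sin_pi_div_two] at h1
    simp [Complex.mul_re] at h0 h1
    exact Complex.ext (by simpa using h0) (by simpa using h1)
  -- building the final state
  have build0 : (∀ t, P 1 t = 0) →
      ∃ (x : Fin 2) (ψ : ({v : V // v ≠ u} → Fin 2) → ℂ) (c : ℂ), ‖c‖ = 1 ∧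
      φ = c • tensorAt u (fun b => if b = x then 1 else 0) ψ := by
    intro h
    refine ⟨0, P 0, 1, by norm_num, ?_⟩
    funext s
    have hres : ∀ b : Fin 2, s u = b → ext b (fun v => s v.1) = s := by
      intro b hb; funext v
      by_cases hv : v = u
      · subst hv; simp [hext, hb]
      · simp [hext, hv]
    show φ s = (1 : ℂ) • ((fun b => if b = (0 : Fin 2) then (1:ℂ) else 0) (s u)
      * P 0 (fun v => s v.1))
    simp only [one_smul]
    by_cases hs : s u = 0
    · rw [if_pos hs, one_mul, hPdef]
      show φ s = φ (ext 0 (fun v => s v.1))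
      rw [hres 0 hs]
    · have hs1 : s u = 1 := by
        have h2 := (s u).isLt
        have h0 : ((s u : Fin 2) : ℕ) ≠ 0 := fun hh => hs (Fin.ext hh)
        have : ((s u : Fin 2) : ℕ) = 1 := by omega
        exact Fin.ext this
      rw [if_neg hs, zero_mul, ← hres 1 hs1]
      simpa [hPdef] using h (fun v => s v.1)
  have build1 : (∀ t, P 0 t = 0) →
      ∃ (x : Fin 2) (ψ : ({v : V // v ≠ u} → Fin 2) → ℂ) (c : ℂ), ‖c‖ = 1 ∧
      φ = c • tensorAt u (fun b => if b = x then 1 else 0) ψ := by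
    intro h
    refine ⟨1, P 1, 1, by norm_num, ?_⟩
    funext s
    have hres : ∀ b : Fin 2, s u = b → ext b (fun v => s v.1) = s := by
      intro b hb; funext v
      by_cases hv : v = u
      · subst hv; simp [hext, hb]
      · simp [hext, hv]
    show φ s = (1 : ℂ) • ((fun b => if b = (1 : Fin 2) then (1:ℂ) else 0) (s u)
      * P 1 (fun v => s v.1))
    simp only [one_smul]
    by_cases hs : s u = 1
    · rw [if_pos hs, one_mul, hPdef]
      show φ s = φ (ext 1 (fun v => s v.1))
      rw [hres 1 hs]
    · have hs1 : s u = 0 := by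
        have h2 := (s u).isLt
        have h0 : ((s u : Fin 2) : ℕ) ≠ 1 := fun hh => hs (Fin.ext hh)
        have : ((s u : Fin 2) : ℕ) = 0 := by omega
        exact Fin.ext this
      rw [if_neg hs, zero_mul, ← hres 0 hs1]
      simpa [hPdef] using h (fun v => s v.1)
  -- colinearity analysis
  obtain ⟨c, hc | hc⟩ := hcol
  · -- minus = c • plus :  P0 - P1 = c (P0 + P1)
    have hpt : ∀ t, P 0 t - P 1 t = c * (P 0 t + P 1 t) := by
      intro t
      have := congrFun hc t
      rw [hPI (minusVec 0), hPI (plusVec 0)] at this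
      simp only [Pi.smul_apply, smul_eq_mul, plusVec, minusVec] at this
      simp only [Matrix.cons_val_zero, Matrix.cons_val_one, Matrix.head_cons, map_inv₀,
        Complex.conj_ofReal, map_neg] at this
      refine mul_left_cancel₀ hs2 ?_
      linear_combination this
    by_cases hc1 : c = -1
    · refine build1 fun t => ?_
      have := hpt t; rw [hc1] at this
      linear_combination this / 2
    · have hc1' : (1 : ℂ) + c ≠ 0 := fun h => hc1 (by linear_combination h)
      have hk : ∀ t, P 1 t = ((1 - c) / (1 + c)) * P 0 t := by
        intro t
        field_simp
        linear_combination -hpt t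
      have hSS : S = (starRingEnd ℂ) ((1 - c) / (1 + c)) * ∑ t, (Complex.normSq (P 0 t) : ℂ) := by
        rw [hSdef, Finset.mul_sum]
        refine Finset.sum_congr rfl fun t _ => ?_
        rw [hk t, map_mul, ← Complex.mul_conj]
        ring
      rw [hS] at hSS
      rcases mul_eq_zero.mp hSS.symm with h | h
      · refine build0 fun t => ?_
        rw [hk t]
        have : (1 - c) / (1 + c) = 0 := by
          have := congrArg (starRingEnd ℂ) h
          simpa using this
        rw [this, zero_mul]
      · refine build1 fun t => ?_
        have h' : ∑ t, Complex.normSq (P 0 t) = 0 := by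
          exact_mod_cast h
        have := (Finset.sum_eq_zero_iff_of_nonneg
          (fun t _ => Complex.normSq_nonneg (P 0 t))).mp h' t (Finset.mem_univ t)
        exact Complex.normSq_eq_zero.mp this
  · -- plus = c • minus :  P0 + P1 = c (P0 - P1)
    have hpt : ∀ t, P 0 t + P 1 t = c * (P 0 t - P 1 t) := by
      intro t
      have := congrFun hc t
      rw [hPI (minusVec 0), hPI (plusVec 0)] at this
      simp only [Pi.smul_apply, smul_eq_mul, plusVec, minusVec] at this
      simp only [Matrix.cons_val_zero, Matrix.cons_val_one, Matrix.head_cons, map_inv₀,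
        Complex.conj_ofReal, map_neg] at this
      refine mul_left_cancel₀ hs2 ?_
      linear_combination this
    by_cases hc1 : c = 1
    · refine build0 fun t => ?_
      have := hpt t; rw [hc1] at this
      linear_combination this / 2
    · have hc1' : (1 : ℂ) - c ≠ 0 := fun h => hc1 (by linear_combination -h)
      have hk : ∀ t, P 0 t = (-(1 + c) / (1 - c)) * P 1 t := by
        intro t
        rw [div_mul_eq_mul_div, eq_div_iff hc1']
        linear_combination hpt t
      have hSS : S = (-(1 + c) / (1 - c)) * ∑ t, (Complex.normSq (P 1 t) : ℂ) := by
        rw [hSdef, Finset.mul_sum]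
        refine Finset.sum_congr rfl fun t _ => ?_
        rw [hk t, ← Complex.mul_conj]
        ring
      rw [hS] at hSS
      rcases mul_eq_zero.mp hSS.symm with h | h
      · refine build1 fun t => ?_
        rw [hk t]
        rw [h, zero_mul]
      · refine build0 fun t => ?_
        have h' : ∑ t, Complex.normSq (P 1 t) = 0 := by
          exact_mod_cast h
        have := (Finset.sum_eq_zero_iff_of_nonneg
          (fun t _ => Complex.normSq_nonneg (P 1 t))).mp h' t (Finset.mem_univ t)
        exact Complex.normSq_eq_zero.mp this
end
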